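/- Let φ be the piecewise linear function with breakpoints x_i^1 = 1 - 7·2^{-i-3}, x_i^2 = 1 - 5·2^{-i-3} and values φ_i^1 = 1 - 9·2^{-2i-3}, φ_i^2 = 1 - 3·2^{-2i-4} (φ(0)=0, φ(x)=1 for x ≥ 1, φ(x)=-x/2 for x<0). Then for every j ∈ ℕ, the point t_j := 1 - 2^{-j} lies in the interior of an affine piece of φ, φ is differentiable at t_j, and φ'(t_j) = -2^{-j}. -/

import Mathlib

open Filter Set Topology

noncomputable def xA (i : ℕ) : ℝ := 1 - 7 / 2 ^ (i + 3)
noncomputable def xB (i : ℕ) : ℝ := 1 - 5 / 2 ^ (i + 3)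
noncomputable def pA (i : ℕ) : ℝ := 1 - 9 / 2 ^ (2 * i + 3)
noncomputable def pB (i : ℕ) : ℝ := 1 - 3 / 2 ^ (2 * i + 4)

/-- `φ` is the piecewise linear function of Example 2.1: `φ(x) = -x/2` for `x < 0`,
`φ(x) = 1` for `x ≥ 1`, and on `[0,1)` the piecewise linear interpolation through
`(0,0)` and the nodes `(xA i, pA i)`, `(xB i, pB i)`. -/
def IsPhi (φ : ℝ → ℝ) : Prop :=
  (∀ x < (0:ℝ), φ x = -x / 2) ∧ (∀ x ≥ (1:ℝ), φ x = 1) ∧ φ 0 = 0 ∧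
  (∀ i, φ (xA i) = pA i) ∧ (∀ i, φ (xB i) = pB i) ∧
  (∀ x ∈ Set.Icc (0:ℝ) (xA 0), φ x = x * pA 0 / xA 0) ∧
  (∀ i, ∀ x ∈ Set.Icc (xA i) (xB i),
      φ x = pA i + (x - xA i) * (pB i - pA i) / (xB i - xA i)) ∧
  (∀ i, ∀ x ∈ Set.Icc (xB i) (xA (i + 1)),
      φ x = pB i + (x - xB i) * (pA (i + 1) - pB i) / (xA (i + 1) - xB i))

theorem stmt15 (φ : ℝ → ℝ) (hφ : IsPhi φ) :
    ∀ j : ℕ, 1 ≤ j →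
      xB (j - 1) < 1 - 1 / 2 ^ j ∧ (1 - 1 / 2 ^ j : ℝ) < xA j ∧
      HasDerivAt φ (-(1 / 2 ^ j)) (1 - 1 / 2 ^ j) := by

  intro j hj
  obtain ⟨i, rfl⟩ : ∃ i, j = i + 1 := ⟨j - 1, (Nat.succ_pred_eq_of_pos hj).symm⟩
  simp only [Nat.add_sub_cancel]
  have h2i : (0:ℝ) < 2 ^ i := by positivity
  have h1 : xB i < 1 - 1 / 2 ^ (i + 1) := by
    unfold xB; rw [pow_add, pow_add]; push_cast; rw [sub_lt_sub_iff_left, div_lt_div_iff₀ (by positivity) (by positivity)]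
    nlinarith
  have h2 : (1 - 1 / 2 ^ (i + 1) : ℝ) < xA (i + 1) := by
    have e4 : (2:ℝ) ^ (i + 1 + 3) = 2 ^ i * 16 := by
      rw [show i + 1 + 3 = i + 4 from by ring, pow_add]; norm_num
    unfold xA; rw [pow_add, e4]; push_cast
    rw [sub_lt_sub_iff_left, div_lt_div_iff₀ (by positivity) (by positivity)]
    nlinarith
  refine ⟨h1, h2, ?_⟩
  obtain ⟨-, -, -, -, -, -, -, haff⟩ := hφ
  set c : ℝ := (pA (i + 1) - pB i) / (xA (i + 1) - xB i) with hc
  have hden : xA (i + 1) - xB i = 3 / 2 ^ (i + 4) := by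
    unfold xA xB
    have h4 : (2:ℝ) ^ (i + 4) = 2 * 2 ^ (i + 3) := by rw [pow_succ (2:ℝ) (i+3)]; ring_nf
    have : (2:ℝ) ^ (i + 1 + 3) = 2 ^ (i + 4) := by congr 1
    rw [this, h4]
    have a : (0:ℝ) < 2 ^ (i + 3) := by positivity
    field_simp
    ring
  have hnum : pA (i + 1) - pB i = -3 / 2 ^ (2 * i + 5) := by
    unfold pA pB
    have e1 : 2 * (i + 1) + 3 = 2 * i + 5 := by ring
    rw [e1]
    have h5 : (2:ℝ) ^ (2 * i + 5) = 2 * 2 ^ (2 * i + 4) := by rw [pow_succ]; ring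
    rw [h5]
    have a : (0:ℝ) < 2 ^ (2 * i + 4) := by positivity
    field_simp; ring
  have hcval : c = -(1 / 2 ^ (i + 1)) := by
    have hsplit : (2:ℝ) ^ (2 * i + 5) = 2 ^ (i + 4) * 2 ^ (i + 1) := by
      rw [← pow_add]; congr 1; ring
    have a1 : (0:ℝ) < 2 ^ (i + 1) := by positivity
    have a2 : (0:ℝ) < 2 ^ (i + 4) := by positivity
    rw [hc, hden, hnum, hsplit]
    field_simp
  have hg : HasDerivAt (fun x : ℝ => pB i + (x - xB i) * (pA (i + 1) - pB i) / (xA (i + 1) - xB i)) c (1 - 1 / 2 ^ (i + 1)) := by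
    have : HasDerivAt (fun x : ℝ => pB i + (x - xB i) * c) c (1 - 1 / 2 ^ (i + 1)) := by
      simpa using (((hasDerivAt_id (1 - 1 / 2 ^ (i + 1) : ℝ)).sub_const (xB i)).mul_const c).const_add (pB i)
    refine this.congr_of_eventuallyEq (Eventually.of_forall fun x => ?_)
    rw [hc]; ring
  rw [hcval] at hg
  refine hg.congr_of_eventuallyEq ?_
  have hmem : Ioo (xB i) (xA (i + 1)) ∈ 𝓝 (1 - 1 / 2 ^ (i + 1) : ℝ) :=
    Ioo_mem_nhds h1 h2
  filter_upwards [hmem] with x hx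
  exact haff i x ⟨le_of_lt hx.1, le_of_lt hx.2⟩
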